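/- The connectivity of the modified bubble-sort graph MB_n is n, for n ≥ 4: the minimum size of a vertex set whose removal disconnects MB_n equals n. -/

import Mathlib

/-- The modified bubble-sort graph: the Cayley graph of `Sym(n)` generated by the
transpositions `(12),(23),…,((n-1)n),(n1)` (positions taken mod `n`). -/
def MB (n : ℕ) : SimpleGraph (Equiv.Perm (Fin n)) :=
  SimpleGraph.fromRel fun g h =>
    ∃ i : Fin n, h = g * Equiv.swap i ⟨(i.val + 1) % n, Nat.mod_lt _ i.pos⟩

namespace MBAux

variable {n : ℕ} [NeZero n]

/-- the generators -/
def sgen (n : ℕ) (i : Fin n) : Equiv.Perm (Fin n) :=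
  Equiv.swap i ⟨(i.val + 1) % n, Nat.mod_lt _ i.pos⟩

lemma MB_eq (n : ℕ) : MB n = SimpleGraph.fromRel fun g h => ∃ i, h = g * sgen n i := rfl

lemma fin_one_ne_zero (hn : 2 ≤ n) : (1 : Fin n) ≠ 0 := by
  obtain ⟨m, rfl⟩ : ∃ m, n = m + 2 := ⟨n - 2, by omega⟩
  simp [Fin.ext_iff]

lemma fin_two_ne_zero (hn : 3 ≤ n) : (2 : Fin n) ≠ 0 := by
  obtain ⟨m, rfl⟩ : ∃ m, n = m + 3 := ⟨n - 3, by omega⟩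
  intro h
  have := congrArg Fin.val h
  have h2 : ((2 : Fin (m+3)) : ℕ) = 2 := rfl
  have h0 : ((0 : Fin (m+3)) : ℕ) = 0 := rfl
  rw [h2, h0] at this
  exact two_ne_zero this

lemma val_mk {a : ℕ} (h : a < n) : ((⟨a, h⟩ : Fin n) : ℕ) = a := rfl

lemma sgen_eq (hn : 2 ≤ n) (i : Fin n) : sgen n i = Equiv.swap i (i + 1) := by
  have : (⟨(i.val + 1) % n, Nat.mod_lt _ i.pos⟩ : Fin n) = i + 1 := by
    apply Fin.ext
    have h1 : (1 : Fin n).val = 1 := by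
      obtain ⟨m, rfl⟩ : ∃ m, n = m + 2 := ⟨n - 2, by omega⟩
      rfl
    simp [Fin.add_def, h1]
  rw [sgen, this]

lemma one_lt_ne (hn : 2 ≤ n) (i : Fin n) : i ≠ i + 1 := by
  intro h
  exact fin_one_ne_zero hn (left_eq_add.mp h)

lemma sgen_ne_one (hn : 2 ≤ n) (i : Fin n) : sgen n i ≠ 1 := by
  rw [sgen_eq hn]
  intro h
  exact one_lt_ne hn i (Equiv.swap_eq_one_iff.mp h)

lemma sgen_mul_self (i : Fin n) : sgen n i * sgen n i = 1 := Equiv.swap_mul_self _ _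

lemma adj_iff (hn : 2 ≤ n) (g h : Equiv.Perm (Fin n)) :
    (MB n).Adj g h ↔ g ≠ h ∧ ∃ i, h = g * sgen n i := by
  rw [MB_eq, SimpleGraph.fromRel_adj]
  constructor
  · rintro ⟨hne, (⟨i, rfl⟩ | ⟨i, rfl⟩)⟩
    · exact ⟨hne, i, rfl⟩
    · refine ⟨hne, i, ?_⟩
      rw [mul_assoc, sgen_mul_self, mul_one]
  · rintro ⟨hne, i, rfl⟩
    exact ⟨hne, Or.inl ⟨i, rfl⟩⟩

lemma adj_mul_sgen (hn : 2 ≤ n) (g : Equiv.Perm (Fin n)) (i : Fin n) :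
    (MB n).Adj g (g * sgen n i) := by
  rw [adj_iff hn]
  refine ⟨fun h => sgen_ne_one hn i ?_, i, rfl⟩
  exact (mul_left_cancel (a := g) (by simpa using h)).symm

lemma sgen_injective (hn : 4 ≤ n) : Function.Injective (sgen n) := by
  intro i j h
  rw [sgen_eq (by omega), sgen_eq (by omega)] at h
  by_contra hij
  have hi : Equiv.swap j (j+1) i = i + 1 := by rw [← h]; exact Equiv.swap_apply_left _ _
  have hji : i = j ∨ i = j + 1 := by
    by_contra hc
    push_neg at hc
    rw [Equiv.swap_apply_of_ne_of_ne hc.1 hc.2] at hi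
    exact one_lt_ne (by omega) i hi
  rcases hji with rfl | rfl
  · exact hij rfl
  · rw [Equiv.swap_apply_right] at hi
    rw [add_assoc, left_eq_add] at hi
    exact fin_two_ne_zero (n := n) (by omega) (by rw [← hi]; ext; simp [Fin.val_add])


/-- rotation -/
def rot (n : ℕ) : Equiv.Perm (Fin n) := finRotate n

lemma rot_apply (hn : 2 ≤ n) (v : Fin n) : rot n v = v + 1 := by
  obtain ⟨m, rfl⟩ : ∃ m, n = m + 1 := ⟨n - 1, by omega⟩
  exact finRotate_succ_apply v

lemma rot_conj (hn : 2 ≤ n) (j : Fin n) :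
    rot n * sgen n j * (rot n)⁻¹ = sgen n (j + 1) := by
  rw [sgen_eq hn, sgen_eq hn, ← Equiv.swap_apply_apply, rot_apply hn, rot_apply hn]

open Fin.NatCast Fin.CommRing in
lemma rot_pow_conj (hn : 2 ≤ n) (t : ℕ) (j : Fin n) :
    (rot n)^t * sgen n j * ((rot n)^t)⁻¹ = sgen n (j + (t : Fin n)) := by
  induction t with
  | zero => simp
  | succ t ih =>
    have : (rot n)^(t+1) = rot n * (rot n)^t := by rw [pow_succ']
    rw [this, mul_inv_rev, show rot n * (rot n)^t * sgen n j * (((rot n)^t)⁻¹ * (rot n)⁻¹)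
        = rot n * ((rot n)^t * sgen n j * ((rot n)^t)⁻¹) * (rot n)⁻¹ by
      simp [mul_assoc], ih, rot_conj hn]
    congr 1
    push_cast
    ring

open Fin.NatCast Fin.CommRing in
/-- conjugation plus translation automorphism as a bare function with inverse -/
lemma exists_auto (hn : 2 ≤ n) (x p : Equiv.Perm (Fin n)) (j i : Fin n) :
    ∃ φ : Equiv.Perm (Fin n) ≃ Equiv.Perm (Fin n),
      (∀ g h, (MB n).Adj (φ g) (φ h) ↔ (MB n).Adj g h) ∧
      φ x = p ∧ φ (x * sgen n j) = p * sgen n i := by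
  classical
  set t : ℕ := ((i - j : Fin n)).val with ht
  set c : Equiv.Perm (Fin n) := (rot n)^t with hc
  have hconj : ∀ k : Fin n, c * sgen n k * c⁻¹ = sgen n (k + (i - j)) := by
    intro k
    rw [hc, rot_pow_conj hn, ht, Fin.cast_val_eq_self]
  refine ⟨(Equiv.mulRight c⁻¹).trans (Equiv.mulLeft (p * c * x⁻¹)), ?_, ?_, ?_⟩
  · intro g h
    have happ : ∀ g : Equiv.Perm (Fin n),
        ((Equiv.mulRight c⁻¹).trans (Equiv.mulLeft (p * c * x⁻¹))) g = p * c * x⁻¹ * g * c⁻¹ :=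
      fun g => rfl
    rw [adj_iff hn, adj_iff hn, happ, happ]
    constructor
    · rintro ⟨hne, k, hk⟩
      refine ⟨fun hgh => hne (by rw [hgh]), k - (i - j), ?_⟩
      have : h = (p * c * x⁻¹)⁻¹ * (p * c * x⁻¹ * g * c⁻¹ * sgen n k) * c := by
        rw [← hk]; group
      rw [this]
      have h2 : c⁻¹ * sgen n k * c = sgen n (k - (i - j)) := by
        have := hconj (k - (i - j))
        rw [show k - (i - j) + (i - j) = k by ring] at this
        rw [← this]; group
      rw [← h2]; group
    · rintro ⟨hne, k, rfl⟩
      refine ⟨fun hgh => hne (mul_left_cancel (mul_right_cancel hgh)), k + (i - j), ?_⟩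
      have := hconj k
      rw [← this]; group
  · show p * c * x⁻¹ * x * c⁻¹ = p
    group
  · show p * c * x⁻¹ * (x * sgen n j) * c⁻¹ = p * sgen n i
    have := hconj j
    rw [show p * c * x⁻¹ * (x * sgen n j) * c⁻¹ = p * (c * sgen n j * c⁻¹) by group, hconj j,
      show j + (i - j) = i by ring]


lemma reach_all (hn : 2 ≤ n) (g g' : Equiv.Perm (Fin n)) :
    Relation.ReflTransGen (MB n).Adj g g' := by
  obtain ⟨m, rfl⟩ : ∃ m, n = m + 1 := ⟨n - 1, by omega⟩
  have key : ∀ h : Equiv.Perm (Fin (m+1)),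
      h ∈ Submonoid.closure (Set.range fun i : Fin m => Equiv.swap i.castSucc i.succ) →
      ∀ g : Equiv.Perm (Fin (m+1)), Relation.ReflTransGen (MB (m+1)).Adj g (g * h) := by
    intro h hh
    induction hh using Submonoid.closure_induction with
    | one => intro g; rw [mul_one]
    | mem x hx =>
      intro g
      obtain ⟨i, rfl⟩ := hx
      have hx' : Equiv.swap i.castSucc i.succ = sgen (m+1) i.castSucc := by
        rw [sgen_eq hn]
        congr 1
        apply Fin.ext
        have h1 : (1 : Fin (m+1)).val = 1 := by
          obtain ⟨m', rfl⟩ : ∃ m', m = m' + 1 := ⟨m - 1, by omega⟩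
          rfl
        have hi := i.is_lt
        rw [Fin.val_succ, Fin.val_add, Fin.coe_castSucc, h1, Nat.mod_eq_of_lt (by omega)]
      have hstep := adj_mul_sgen hn g i.castSucc
      rw [← hx'] at hstep
      exact Relation.ReflTransGen.single hstep
    | mul a b ha hb iha ihb =>
      intro g
      have h1 := iha g
      have h2 := ihb (g * a)
      rw [mul_assoc] at *
      exact h1.trans h2
  have hcl : g⁻¹ * g' ∈ Submonoid.closure
      (Set.range fun i : Fin m => Equiv.swap i.castSucc i.succ) := by
    rw [Equiv.Perm.mclosure_swap_castSucc_succ]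
    trivial
  have := key _ hcl g
  rwa [mul_inv_cancel_left] at this

section Bd

open Finset
open scoped Classical

variable (n)

noncomputable def bd (X : Finset (Equiv.Perm (Fin n))) : Finset (Equiv.Perm (Fin n)) :=
  Finset.univ.filter (fun v => v ∉ X ∧ ∃ u ∈ X, (MB n).Adj u v)

def proper (X : Finset (Equiv.Perm (Fin n))) : Prop :=
  X.Nonempty ∧ (Finset.univ \ (X ∪ bd n X)).Nonempty

noncomputable def kap : ℕ := sInf {k | ∃ F, proper n F ∧ (bd n F).card = k}

def frag (F : Finset (Equiv.Perm (Fin n))) : Prop := proper n F ∧ (bd n F).card = kap n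

noncomputable def asz : ℕ := sInf {m | ∃ A, frag n A ∧ A.card = m}

def atom (A : Finset (Equiv.Perm (Fin n))) : Prop := frag n A ∧ A.card = asz n

variable {n}

lemma mem_bd {X : Finset (Equiv.Perm (Fin n))} {v} :
    v ∈ bd n X ↔ v ∉ X ∧ ∃ u ∈ X, (MB n).Adj u v := by
  simp [bd]

lemma kap_le {F} (hF : proper n F) : kap n ≤ (bd n F).card := Nat.sInf_le ⟨F, hF, rfl⟩

lemma exists_frag (hex : ∃ F, proper n F) : ∃ F, frag n F := by
  obtain ⟨F, hF⟩ := hex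
  have hne : {k | ∃ F, proper n F ∧ (bd n F).card = k}.Nonempty := ⟨_, F, hF, rfl⟩
  obtain ⟨F', hF', hc⟩ := Nat.sInf_mem hne
  exact ⟨F', hF', hc⟩

lemma asz_le {F} (hF : frag n F) : asz n ≤ F.card := Nat.sInf_le ⟨F, hF, rfl⟩

lemma exists_atom (hex : ∃ F, proper n F) : ∃ A, atom n A := by
  obtain ⟨F, hF⟩ := exists_frag hex
  obtain ⟨A, hA, hc⟩ := Nat.sInf_mem (⟨_, F, hF, rfl⟩ :
    {m | ∃ A, frag n A ∧ A.card = m}.Nonempty)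
  exact ⟨A, hA, hc⟩

lemma bd_inter_subset {X Y : Finset (Equiv.Perm (Fin n))} :
    bd n (X ∩ Y) ⊆ X ∪ bd n X := by
  intro v hv
  rw [mem_bd] at hv
  obtain ⟨hvn, u, hu, hadj⟩ := hv
  by_cases hvX : v ∈ X
  · exact Finset.mem_union_left _ hvX
  · exact Finset.mem_union_right _ (mem_bd.mpr ⟨hvX, u, (Finset.mem_inter.mp hu).1, hadj⟩)

lemma corner_proper {X Y P : Finset (Equiv.Perm (Fin n))} (hPX : bd n X ⊆ P)
    (hne : (X ∩ Y).Nonempty) (hext : (Finset.univ \ (X ∪ P)).Nonempty) :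
    proper n (X ∩ Y) := by
  refine ⟨hne, ?_⟩
  obtain ⟨w, hw⟩ := hext
  rw [Finset.mem_sdiff, Finset.mem_union] at hw
  push_neg at hw
  refine ⟨w, ?_⟩
  rw [Finset.mem_sdiff, Finset.mem_union]
  push_neg
  refine ⟨hw.1, fun h => hw.2.1 (Finset.mem_inter.mp h).1, fun h => ?_⟩
  rcases Finset.mem_union.mp (bd_inter_subset h) with h' | h'
  · exact hw.2.1 h'
  · exact hw.2.2 (hPX h')

lemma corner_bd_subset {X Y P Q : Finset (Equiv.Perm (Fin n))} (hPX : bd n X ⊆ P)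
    (hQY : bd n Y ⊆ Q) :
    bd n (X ∩ Y) ⊆ (P ∩ Y) ∪ (P ∩ Q) ∪ (X ∩ Q) := by
  intro v hv
  have hvX : v ∈ X ∪ bd n X := bd_inter_subset hv
  have hvY : v ∈ Y ∪ bd n Y := by
    rw [Finset.inter_comm] at hv
    exact bd_inter_subset hv
  rw [mem_bd] at hv
  have hvn := hv.1
  rw [Finset.mem_inter] at hvn
  simp only [Finset.mem_union, Finset.mem_inter]
  rcases Finset.mem_union.mp hvX with hx | hx <;> rcases Finset.mem_union.mp hvY with hy | hy
  · exact absurd ⟨hx, hy⟩ hvn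
  · exact Or.inr ⟨hx, hQY hy⟩
  · exact Or.inl (Or.inl ⟨hPX hx, hy⟩)
  · exact Or.inl (Or.inr ⟨hPX hx, hQY hy⟩)

lemma card_split (A SA : Finset (Equiv.Perm (Fin n))) (hd : ∀ x ∈ A, x ∉ SA)
    (T : Finset (Equiv.Perm (Fin n))) :
    T.card = (T ∩ A).card + (T ∩ SA).card + (T ∩ (Finset.univ \ (A ∪ SA))).card := by
  have h1 : (T ∩ (A ∪ SA)).card + (T \ (A ∪ SA)).card = T.card :=
    Finset.card_inter_add_card_sdiff T (A ∪ SA)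
  have h2 : T ∩ (A ∪ SA) = (T ∩ A) ∪ (T ∩ SA) := Finset.inter_union_distrib_left ..
  have h3 : Disjoint (T ∩ A) (T ∩ SA) := by
    rw [Finset.disjoint_left]
    intro x hx hx'
    exact hd x (Finset.mem_inter.mp hx).2 (Finset.mem_inter.mp hx').2
  have h4 : T \ (A ∪ SA) = T ∩ (Finset.univ \ (A ∪ SA)) := by
    ext x
    simp [Finset.mem_sdiff]
  rw [← h1, h2, Finset.card_union_of_disjoint h3, h4]


lemma mem_not_bd {X : Finset (Equiv.Perm (Fin n))} {v} (hv : v ∈ X) : v ∉ bd n X :=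
  fun h => (mem_bd.mp h).1 hv

lemma bd_compl_subset (X : Finset (Equiv.Perm (Fin n))) :
    bd n (Finset.univ \ (X ∪ bd n X)) ⊆ bd n X := by
  intro v hv
  rw [mem_bd] at hv
  obtain ⟨hvn, u, hu, hadj⟩ := hv
  rw [Finset.mem_sdiff, Finset.mem_union] at hu
  push_neg at hu
  have hvX : v ∈ X ∪ bd n X := by
    by_contra hc
    exact hvn (Finset.mem_sdiff.mpr ⟨Finset.mem_univ _, hc⟩)
  rcases Finset.mem_union.mp hvX with hx | hx
  · exact absurd (mem_bd.mpr ⟨hu.2.1, v, hx, hadj.symm⟩) hu.2.2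
  · exact hx

lemma frag_compl {F : Finset (Equiv.Perm (Fin n))} (hF : frag n F) :
    frag n (Finset.univ \ (F ∪ bd n F)) := by
  obtain ⟨⟨hne, hext⟩, hcard⟩ := hF
  refine ⟨⟨hext, ?_⟩, ?_⟩
  · obtain ⟨x, hx⟩ := hne
    refine ⟨x, ?_⟩
    rw [Finset.mem_sdiff, Finset.mem_union]
    push_neg
    refine ⟨Finset.mem_univ _, fun h => ?_, fun h => ?_⟩
    · rw [Finset.mem_sdiff, Finset.mem_union] at h
      exact h.2 (Or.inl hx)
    · exact (mem_bd.mp (bd_compl_subset _ h)).1 hx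
  · refine le_antisymm ?_ (kap_le ⟨hext, ?_⟩)
    · rw [← hcard]
      exact Finset.card_le_card (bd_compl_subset _)
    · obtain ⟨x, hx⟩ := hne
      refine ⟨x, ?_⟩
      rw [Finset.mem_sdiff, Finset.mem_union]
      push_neg
      refine ⟨Finset.mem_univ _, fun h => ?_, fun h => ?_⟩
      · rw [Finset.mem_sdiff, Finset.mem_union] at h
        exact h.2 (Or.inl hx)
      · exact (mem_bd.mp (bd_compl_subset _ h)).1 hx

lemma corner_kap {X Y P Q : Finset (Equiv.Perm (Fin n))} (hPX : bd n X ⊆ P)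
    (hQY : bd n Y ⊆ Q) (hne : (X ∩ Y).Nonempty)
    (hext : (Finset.univ \ (X ∪ P)).Nonempty) :
    kap n ≤ (P ∩ Y).card + (P ∩ Q).card + (X ∩ Q).card := by
  refine le_trans (kap_le (corner_proper hPX hne hext)) ?_
  refine le_trans (Finset.card_le_card (corner_bd_subset hPX hQY)) ?_
  refine le_trans (Finset.card_union_le _ _) ?_
  exact Nat.add_le_add_right (Finset.card_union_le _ _) _

lemma frag_of_le {F : Finset (Equiv.Perm (Fin n))} (hprop : proper n F)
    (hle : (bd n F).card ≤ kap n) : frag n F := ⟨hprop, le_antisymm hle (kap_le hprop)⟩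

lemma atom_absorb {A F : Finset (Equiv.Perm (Fin n))} (hA : atom n A) (hF : frag n F)
    (hsub : F ⊆ A) : F = A :=
  Finset.eq_of_subset_of_card_le hsub (hA.2 ▸ asz_le hF)

/-- Mader's key lemma: an atom intersecting a fragment is contained in it. -/
lemma atom_inter {A B : Finset (Equiv.Perm (Fin n))} (hA : atom n A) (hB : frag n B)
    (hab : (A ∩ B).Nonempty) : A ⊆ B := by
  set SA := bd n A with hSA
  set SB := bd n B with hSB
  set Ab := Finset.univ \ (A ∪ SA) with hAb
  set Bb := Finset.univ \ (B ∪ SB) with hBb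
  have hAfrag : frag n A := hA.1
  have hAbfrag : frag n Ab := frag_compl hAfrag
  have hBbfrag : frag n Bb := frag_compl hB
  have hAb_bd : bd n Ab ⊆ SA := bd_compl_subset A
  have hBb_bd : bd n Bb ⊆ SB := bd_compl_subset B
  have hAbne : Ab.Nonempty := hAfrag.1.2
  have hAne : A.Nonempty := hAfrag.1.1
  have hextA : (Finset.univ \ (A ∪ SA)).Nonempty := hAbne
  have hextAb : (Finset.univ \ (Ab ∪ SA)).Nonempty := by
    obtain ⟨x, hx⟩ := hAne
    refine ⟨x, ?_⟩
    rw [Finset.mem_sdiff, Finset.mem_union]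
    push_neg
    refine ⟨Finset.mem_univ _, fun h => ?_, fun h => (mem_bd.mp h).1 hx⟩
    rw [Finset.mem_sdiff, Finset.mem_union] at h
    exact h.2 (Or.inl hx)
  -- disjointness facts for card_split
  have hdA : ∀ x ∈ A, x ∉ SA := fun x hx hx' => (mem_bd.mp hx').1 hx
  have hdB : ∀ x ∈ B, x ∉ SB := fun x hx hx' => (mem_bd.mp hx').1 hx
  have hcomm : ∀ X Y : Finset (Equiv.Perm (Fin n)), (X ∩ Y).card = (Y ∩ X).card :=
    fun X Y => by rw [Finset.inter_comm]
  -- the nine numbers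
  have hSBc : SB.card = kap n := hB.2
  have hSAc : SA.card = kap n := hAfrag.2
  have E1 : kap n = (A ∩ SB).card + (SA ∩ SB).card + (Ab ∩ SB).card := by
    have h := card_split A SA hdA SB
    rw [← hAb] at h
    rw [← hSBc, h, hcomm SB A, hcomm SB SA, hcomm SB Ab]
  have E2 : kap n = (SA ∩ B).card + (SA ∩ SB).card + (SA ∩ Bb).card := by
    have h := card_split B SB hdB SA
    rw [← hBb] at h
    rw [← hSAc, h]
  have E3 : A.card = (A ∩ B).card + (A ∩ SB).card + (A ∩ Bb).card := by
    have h := card_split B SB hdB A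
    rw [← hBb] at h
    exact h
  have E4 : Bb.card = (A ∩ Bb).card + (SA ∩ Bb).card + (Ab ∩ Bb).card := by
    have h := card_split A SA hdA Bb
    rw [← hAb] at h
    rw [h, hcomm Bb A, hcomm Bb SA, hcomm Bb Ab]
  have E5 : Ab.card = (Ab ∩ B).card + (Ab ∩ SB).card + (Ab ∩ Bb).card := by
    have h := card_split B SB hdB Ab
    rw [← hBb] at h
    exact h
  have C1 : kap n ≤ (SA ∩ B).card + (SA ∩ SB).card + (A ∩ SB).card :=
    corner_kap subset_rfl subset_rfl hab hextA
  have hsz1 : asz n ≤ Ab.card := asz_le hAbfrag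
  have hsz2 : asz n ≤ Bb.card := asz_le hBbfrag
  have hacard : A.card = asz n := hA.2
  have ha1 : 1 ≤ (A ∩ B).card := Finset.card_pos.mpr hab
  by_cases hii : (Ab ∩ Bb).Nonempty
  · -- main case: A ∩ B is a fragment
    have C4 : kap n ≤ (SA ∩ Bb).card + (SA ∩ SB).card + (Ab ∩ SB).card :=
      corner_kap hAb_bd hBb_bd hii hextAb
    have hbf : (A ∩ SB).card ≤ (SA ∩ Bb).card := by omega
    have hfr : frag n (A ∩ B) := by
      refine frag_of_le (corner_proper subset_rfl hab hextA) ?_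
      refine le_trans (Finset.card_le_card (corner_bd_subset subset_rfl subset_rfl)) ?_
      refine le_trans (Finset.card_union_le _ _) ?_
      refine le_trans (Nat.add_le_add_right (Finset.card_union_le _ _) _) ?_
      simp only [← hSA, ← hSB]
      omega
    have := atom_absorb hA hfr Finset.inter_subset_left
    rw [← this]
    exact Finset.inter_subset_right
  · have hii0 : (Ab ∩ Bb).card = 0 := by
      rw [Finset.card_eq_zero]
      exact Finset.not_nonempty_iff_eq_empty.mp hii
    by_cases hc : (A ∩ Bb).Nonempty
    · by_cases hg : (Ab ∩ B).Nonempty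
      · -- A ⊆ Bb, contradiction
        have C2 : kap n ≤ (SA ∩ Bb).card + (SA ∩ SB).card + (A ∩ SB).card :=
          corner_kap subset_rfl hBb_bd hc hextA
        have C3 : kap n ≤ (SA ∩ B).card + (SA ∩ SB).card + (Ab ∩ SB).card :=
          corner_kap hAb_bd subset_rfl hg hextAb
        have hbd : (A ∩ SB).card = (SA ∩ B).card := by omega
        have hfr : frag n (A ∩ Bb) := by
          refine frag_of_le (corner_proper subset_rfl hc hextA) ?_
          refine le_trans (Finset.card_le_card (corner_bd_subset subset_rfl hBb_bd)) ?_
          refine le_trans (Finset.card_union_le _ _) ?_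
          refine le_trans (Nat.add_le_add_right (Finset.card_union_le _ _) _) ?_
          omega
        have heq := atom_absorb hA hfr Finset.inter_subset_left
        exfalso
        obtain ⟨x, hx⟩ := hab
        rw [Finset.mem_inter] at hx
        have hxBb : x ∈ Bb := by
          have hmem : x ∈ A ∩ Bb := by rw [heq]; exact hx.1
          exact (Finset.mem_inter.mp hmem).2
        rw [hBb, Finset.mem_sdiff, Finset.mem_union] at hxBb
        exact hxBb.2 (Or.inl hx.2)
      · -- g = 0 case : contradiction by counting
        exfalso
        have hg0 : (Ab ∩ B).card = 0 := by
          rw [Finset.card_eq_zero]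
          exact Finset.not_nonempty_iff_eq_empty.mp hg
        have C2 : kap n ≤ (SA ∩ Bb).card + (SA ∩ SB).card + (A ∩ SB).card :=
          corner_kap subset_rfl hBb_bd hc hextA
        omega
    · -- c = 0 case : contradiction by counting
      exfalso
      have hc0 : (A ∩ Bb).card = 0 := by
        rw [Finset.card_eq_zero]
        exact Finset.not_nonempty_iff_eq_empty.mp hc
      omega


lemma atom_eq {A B : Finset (Equiv.Perm (Fin n))} (hA : atom n A) (hB : atom n B)
    (hab : (A ∩ B).Nonempty) : A = B :=
  Finset.eq_of_subset_of_card_le (atom_inter hA hB.1 hab) (by rw [hA.2, hB.2])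

section Transport

variable {φ : Equiv.Perm (Fin n) ≃ Equiv.Perm (Fin n)}
variable (hφ : ∀ g h, (MB n).Adj (φ g) (φ h) ↔ (MB n).Adj g h)

include hφ

lemma bd_image (X : Finset (Equiv.Perm (Fin n))) :
    bd n (X.image φ) = (bd n X).image φ := by
  ext v
  rw [mem_bd]
  constructor
  · rintro ⟨hv, u, hu, hadj⟩
    obtain ⟨u', hu', rfl⟩ := Finset.mem_image.mp hu
    rw [Finset.mem_image]
    refine ⟨φ.symm v, ?_, φ.apply_symm_apply v⟩
    rw [mem_bd]
    refine ⟨fun h => hv (Finset.mem_image.mpr ⟨_, h, φ.apply_symm_apply v⟩), u', hu', ?_⟩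
    rw [← hφ, φ.apply_symm_apply]
    exact hadj
  · intro hv
    obtain ⟨w, hw, rfl⟩ := Finset.mem_image.mp hv
    rw [mem_bd] at hw
    obtain ⟨hwn, u, hu, hadj⟩ := hw
    refine ⟨fun h => ?_, φ u, Finset.mem_image_of_mem _ hu, (hφ _ _).mpr hadj⟩
    obtain ⟨w', hw', hww⟩ := Finset.mem_image.mp h
    exact hwn (φ.injective hww ▸ hw')

lemma atom_image {A : Finset (Equiv.Perm (Fin n))} (hA : atom n A) : atom n (A.image φ) := by
  have hext : Finset.univ \ (A.image φ ∪ bd n (A.image φ)) =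
      (Finset.univ \ (A ∪ bd n A)).image φ := by
    rw [bd_image hφ, ← Finset.image_union, Finset.image_sdiff _ _ φ.injective]
    congr 1
    exact (Finset.image_univ_equiv φ).symm
  obtain ⟨⟨⟨hne, hext'⟩, hcard⟩, hatom⟩ := hA
  refine ⟨⟨⟨hne.image _, ?_⟩, ?_⟩, ?_⟩
  · rw [hext]
    exact hext'.image _
  · rw [bd_image hφ, Finset.card_image_of_injective _ φ.injective]
    exact hcard
  · rw [Finset.card_image_of_injective _ φ.injective]
    exact hatom

end Transport

lemma bd_singleton_ge (hn : 4 ≤ n) (v : Equiv.Perm (Fin n)) : n ≤ (bd n {v}).card := by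
  have hsub : Finset.univ.image (fun i : Fin n => v * sgen n i) ⊆ bd n {v} := by
    intro x hx
    obtain ⟨i, _, rfl⟩ := Finset.mem_image.mp hx
    rw [mem_bd]
    refine ⟨fun h => ?_, v, Finset.mem_singleton_self v, adj_mul_sgen (by omega) v i⟩
    rw [Finset.mem_singleton] at h
    exact (adj_mul_sgen (by omega) v i).ne (h.symm)
  have hinj : Function.Injective (fun i : Fin n => v * sgen n i) := by
    intro i j h
    exact sgen_injective hn (mul_left_cancel h)
  calc n = (Finset.univ.image (fun i : Fin n => v * sgen n i)).card := by
        rw [Finset.card_image_of_injective _ hinj, Finset.card_univ, Fintype.card_fin]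
    _ ≤ _ := Finset.card_le_card hsub

lemma atom_two_le (hn : 4 ≤ n) (hkap : kap n < n) {A : Finset (Equiv.Perm (Fin n))}
    (hA : atom n A) : 2 ≤ A.card := by
  by_contra h
  push_neg at h
  interval_cases hcard : A.card
  · exact absurd (Finset.card_eq_zero.mp hcard ▸ hA.1.1.1) (by simp [Finset.Nonempty])
  · obtain ⟨v, hv⟩ := Finset.card_eq_one.mp hcard
    have := bd_singleton_ge hn v
    rw [← hv, hA.1.2] at this
    omega

lemma atom_edge (hn : 4 ≤ n) (hkap : kap n < n) {A : Finset (Equiv.Perm (Fin n))}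
    (hA : atom n A) : ∃ x j, x ∈ A ∧ x * sgen n j ∈ A := by
  obtain ⟨v, hv, w, hw, hvw⟩ := Finset.one_lt_card.mp (atom_two_le hn hkap hA)
  set rel : Equiv.Perm (Fin n) → Equiv.Perm (Fin n) → Prop :=
    fun a b => (MB n).Adj a b ∧ a ∈ A ∧ b ∈ A with hrel
  set C := A.filter (fun w => Relation.ReflTransGen rel v w) with hC
  have hCsub : C ⊆ A := Finset.filter_subset _ _
  have hbdC : bd n C ⊆ bd n A := by
    intro x hx
    rw [mem_bd] at hx
    obtain ⟨hxn, u, hu, hadj⟩ := hx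
    rw [hC, Finset.mem_filter] at hu
    by_cases hxA : x ∈ A
    · exact absurd (Finset.mem_filter.mpr ⟨hxA,
        hu.2.trans (Relation.ReflTransGen.single ⟨hadj, hu.1, hxA⟩)⟩) hxn
    · exact mem_bd.mpr ⟨hxA, u, hu.1, hadj⟩
  have hCfrag : frag n C := by
    refine frag_of_le ⟨⟨v, Finset.mem_filter.mpr ⟨hv, Relation.ReflTransGen.refl⟩⟩, ?_⟩ ?_
    · obtain ⟨z, hz⟩ := hA.1.1.2
      rw [Finset.mem_sdiff, Finset.mem_union] at hz
      push_neg at hz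
      refine ⟨z, ?_⟩
      rw [Finset.mem_sdiff, Finset.mem_union]
      push_neg
      exact ⟨Finset.mem_univ _, fun h => hz.2.1 (hCsub h), fun h => hz.2.2 (hbdC h)⟩
    · rw [← hA.1.2]
      exact Finset.card_le_card hbdC
  have hCA : C = A := atom_absorb hA hCfrag hCsub
  have hwC : w ∈ C := hCA.symm ▸ hw
  have hrtg : Relation.ReflTransGen rel v w := (Finset.mem_filter.mp hwC).2
  rcases Relation.ReflTransGen.cases_head hrtg with heq | ⟨c, hstep, _⟩
  · exact absurd heq hvw
  · obtain ⟨hadj, hvA, hcA⟩ := hstep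
    obtain ⟨_, j, rfl⟩ := (adj_iff (by omega) _ _).mp hadj
    exact ⟨v, j, hvA, hcA⟩

lemma edge_in_atom (hn : 4 ≤ n) (hex : ∃ F, proper n F) (hkap : kap n < n)
    (p : Equiv.Perm (Fin n)) (i : Fin n) :
    ∃ E, atom n E ∧ p ∈ E ∧ p * sgen n i ∈ E := by
  obtain ⟨A, hA⟩ := exists_atom hex
  obtain ⟨x, j, hx, hxj⟩ := atom_edge hn hkap hA
  obtain ⟨φ, hφ, hφx, hφxj⟩ := exists_auto (by omega) x p j i
  exact ⟨A.image φ, atom_image hφ hA, hφx ▸ Finset.mem_image_of_mem φ hx,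
    hφxj ▸ Finset.mem_image_of_mem φ hxj⟩

lemma no_small_cut (hn : 4 ≤ n) (hex : ∃ F, proper n F) (hkap : kap n < n) : False := by
  obtain ⟨A, hA⟩ := exists_atom hex
  obtain ⟨a, ha⟩ := hA.1.1.1
  have hclosed : ∀ g, Relation.ReflTransGen (MB n).Adj a g → g ∈ A := by
    intro g hg
    induction hg with
    | refl => exact ha
    | @tail p q hpq hadj ih =>
      obtain ⟨_, i, rfl⟩ := (adj_iff (by omega) _ _).mp hadj
      obtain ⟨E, hE, hpE, hqE⟩ := edge_in_atom hn hex hkap p i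
      have : A = E := atom_eq hA hE ⟨p, Finset.mem_inter.mpr ⟨ih, hpE⟩⟩
      rw [this]
      exact hqE
  obtain ⟨z, hz⟩ := hA.1.1.2
  rw [Finset.mem_sdiff, Finset.mem_union] at hz
  push_neg at hz
  exact hz.2.1 (hclosed z (reach_all (by omega) a z))

end Bd

end MBAux

open MBAux in
set_option maxHeartbeats 2000000 in
theorem stmt_15 {n : ℕ} (hn : 4 ≤ n) :
    IsLeast {k : ℕ | ∃ S : Set (Equiv.Perm (Fin n)),
      S.ncard = k ∧ ¬ ((MB n).induce Sᶜ).Preconnected} n := by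
  haveI : NeZero n := ⟨by omega⟩
  classical
  constructor
  · -- n is achieved: remove the neighbours of the identity
    set i0 : Fin n := ⟨0, by omega⟩ with hi0
    set i1 : Fin n := ⟨1, by omega⟩ with hi1
    set i2 : Fin n := ⟨2, by omega⟩ with hi2
    set i3 : Fin n := ⟨3, by omega⟩ with hi3
    have hs0 : sgen n i0 = Equiv.swap i0 i1 := by
      rw [sgen]
      congr 1
      apply Fin.ext
      simp only [hi0, hi1, val_mk]
      rw [Nat.mod_eq_of_lt (by omega)]
    have hs2 : sgen n i2 = Equiv.swap i2 i3 := by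
      rw [sgen]
      congr 1
      apply Fin.ext
      simp only [hi2, hi3, val_mk]
      rw [Nat.mod_eq_of_lt (by omega)]
    set w : Equiv.Perm (Fin n) := sgen n i0 * sgen n i2 with hwdef
    set S : Set (Equiv.Perm (Fin n)) := Set.range (sgen n) with hS
    have h1S : (1 : Equiv.Perm (Fin n)) ∉ S := by
      rintro ⟨i, hi⟩
      exact sgen_ne_one (by omega) i hi
    have hwne1 : w ≠ 1 := by
      intro h
      have h02 : sgen n i0 = sgen n i2 := by
        have := eq_inv_of_mul_eq_one_left h
        rw [hs0, hs2] at this ⊢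
        rw [this]
        exact (Equiv.swap_inv _ _).symm
      have := sgen_injective hn h02
      rw [hi0, hi2, Fin.mk.injEq] at this
      omega
    have hv0 : (i0 : ℕ) = 0 := by rw [hi0]
    have hv1 : (i1 : ℕ) = 1 := by rw [hi1]
    have hv2 : (i2 : ℕ) = 2 := by rw [hi2]
    have hv3 : (i3 : ℕ) = 3 := by rw [hi3]
    have hwS : w ∉ S := by
      rintro ⟨j, hj⟩
      have e1 : sgen n i2 i0 = i0 := by
        rw [hs2]
        exact Equiv.swap_apply_of_ne_of_ne
          (Fin.ne_of_val_ne (by rw [hv0, hv2]; omega))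
          (Fin.ne_of_val_ne (by rw [hv0, hv3]; omega))
      have e2 : sgen n i0 i0 = i1 := by rw [hs0]; exact Equiv.swap_apply_left _ _
      have happ : sgen n j i0 = i1 := by
        rw [hj, hwdef, Equiv.Perm.mul_apply, e1, e2]
      by_cases hj0 : j = i0
      · rw [hj0] at hj
        have h' : sgen n i0 * sgen n i2 = sgen n i0 * 1 := by
          rw [mul_one, ← hwdef]
          exact hj.symm
        exact sgen_ne_one (by omega) i2 (mul_left_cancel h')
      · -- j ≠ i0
        rw [sgen] at happ
        rcases eq_or_ne i0 j with h' | h'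
        · exact hj0 h'.symm
        rcases eq_or_ne i0 (⟨(j.val + 1) % n, Nat.mod_lt _ j.pos⟩ : Fin n) with h'' | h''
        · rw [← h'', Equiv.swap_apply_right] at happ
          -- j = i1 and i0.val = (j.val+1) % n : contradiction
          have hv : (0 : ℕ) = (j.val + 1) % n := by
            rw [← hv0]
            exact congrArg Fin.val h''
          have hjv : (j : ℕ) = 1 := by
            rw [← hv1]
            exact congrArg Fin.val happ
          have hjlt := j.is_lt
          rcases Nat.lt_or_ge (j.val + 1) n with hlt' | hge'
          · rw [Nat.mod_eq_of_lt hlt'] at hv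
            omega
          · omega
        · rw [Equiv.swap_apply_of_ne_of_ne h' h''] at happ
          have h3 := congrArg Fin.val happ
          rw [hv0, hv1] at h3
          omega
    refine ⟨S, ?_, ?_⟩
    · have : S = ↑(Finset.univ.image (sgen n)) := by
        rw [Finset.coe_image, Finset.coe_univ, Set.image_univ, hS]
      rw [this, Set.ncard_coe_finset,
        Finset.card_image_of_injective _ (sgen_injective hn),
        Finset.card_univ, Fintype.card_fin]
    · intro hpre
      have h1c : (1 : Equiv.Perm (Fin n)) ∈ Sᶜ := h1S
      have hwc : w ∈ Sᶜ := hwS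
      have key : ∀ (x y : ↥(Sᶜ)) (p : ((MB n).induce Sᶜ).Walk x y),
          ↑x = (1 : Equiv.Perm (Fin n)) → ↑y = w → False := by
        intro x y p
        cases p with
        | nil =>
          intro h1 h2
          exact hwne1 (by rw [← h2, h1])
        | cons hadj q =>
          intro h1 h2
          rename_i b
          have hb : (MB n).Adj ↑x ↑b := hadj
          rw [h1] at hb
          obtain ⟨_, i, hbi⟩ := (adj_iff (by omega) _ _).mp hb
          rw [one_mul] at hbi
          exact b.2 ⟨i, hbi.symm⟩
      obtain ⟨p⟩ := hpre ⟨1, h1c⟩ ⟨w, hwc⟩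
      exact key _ _ p rfl rfl
  · -- lower bound
    rintro k ⟨S, hcard, hnp⟩
    by_contra hlt
    push_neg at hlt
    have hSfin : S.Finite := Set.toFinite S
    have hT : hSfin.toFinset.card = k := by
      rw [← Set.ncard_eq_toFinset_card S hSfin]
      exact hcard
    rw [SimpleGraph.Preconnected] at hnp
    push_neg at hnp
    obtain ⟨u, v, huv⟩ := hnp
    set rel : Equiv.Perm (Fin n) → Equiv.Perm (Fin n) → Prop :=
      fun a b => (MB n).Adj a b ∧ a ∉ S ∧ b ∉ S with hrel
    set F0 : Finset (Equiv.Perm (Fin n)) :=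
      Finset.univ.filter (fun x => Relation.ReflTransGen rel ↑u x) with hF0
    have hF0u : ↑u ∈ F0 := Finset.mem_filter.mpr ⟨Finset.mem_univ _, Relation.ReflTransGen.refl⟩
    have hmemS : ∀ x, Relation.ReflTransGen rel ↑u x → x ∉ S := by
      intro x hx
      induction hx with
      | refl => exact u.2
      | @tail p q hp hq ih => exact hq.2.2
    have hreach : ∀ x, Relation.ReflTransGen rel ↑u x → ∀ hx : x ∈ Sᶜ,
        ((MB n).induce Sᶜ).Reachable u ⟨x, hx⟩ := by
      intro x hx
      induction hx with
      | refl => intro hx; rw [Subtype.coe_eta]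
      | @tail p q hp hq ih =>
        intro hq'
        have hstep : ((MB n).induce Sᶜ).Adj ⟨p, hq.2.1⟩ ⟨q, hq'⟩ := hq.1
        exact (ih hq.2.1).trans hstep.reachable
    have hvF0 : ↑v ∉ F0 := by
      intro h
      exact huv (by
        have := hreach ↑v (Finset.mem_filter.mp h).2 v.2
        rwa [Subtype.coe_eta] at this)
    have hbdS : bd n F0 ⊆ hSfin.toFinset := by
      intro x hx
      rw [mem_bd] at hx
      obtain ⟨hxn, y, hy, hadj⟩ := hx
      have hyr := (Finset.mem_filter.mp hy).2
      by_cases hxS : x ∈ S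
      · exact hSfin.mem_toFinset.mpr hxS
      · exact absurd (Finset.mem_filter.mpr ⟨Finset.mem_univ _,
          hyr.trans (Relation.ReflTransGen.single ⟨hadj, hmemS y hyr, hxS⟩)⟩) hxn
    have hprop : proper n F0 := by
      refine ⟨⟨↑u, hF0u⟩, ⟨↑v, ?_⟩⟩
      rw [Finset.mem_sdiff, Finset.mem_union]
      push_neg
      refine ⟨Finset.mem_univ _, hvF0, fun h => ?_⟩
      exact v.2 (hSfin.mem_toFinset.mp (hbdS h))
    refine no_small_cut hn ⟨F0, hprop⟩ ?_
    calc kap n ≤ (bd n F0).card := kap_le hprop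
      _ ≤ hSfin.toFinset.card := Finset.card_le_card hbdS
      _ = k := hT
      _ < n := hlt
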